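/- Let D be a set of polynomials of degree at most n with real coefficients lying in (1/N)·ℤ for a fixed positive integer N, with all coefficients bounded above, ordered lexicographically by coefficients (constant term first). Then P ∈ D is the unique maximum of D in the lexicographic order if and only if there exists ε > 0 such that P(t) > Q(t) for all 0 < t < ε and all Q ∈ D with Q ≠ P. -/

import Mathlib

open Finset

/-- Coefficientwise lexicographic order on polynomials encoded by their coefficient
functions (constant term first): `LexLt f g` iff `f < g`, i.e. there is an index `i`
with `f j = g j` for all `j < i` and `f i < g i`. -/
def LexLt (f g : ℕ → ℝ) : Prop := ∃ i : ℕ, (∀ j < i, f j = g j) ∧ f i < g i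

/-- Evaluation of a polynomial of degree at most `n` with coefficient function `f`. -/
noncomputable def evalPoly (n : ℕ) (f : ℕ → ℝ) (t : ℝ) : ℝ :=
  ∑ i ∈ Finset.range (n + 1), f i * t ^ i

/-- Key quantitative lemma: if `f` and `g` agree below `i`, `g i` exceeds `f i` by at
least `δ`, and `f j - g j ≤ C` everywhere, then for small positive `t` we have
`f(t) < g(t)`. -/
lemma evalPoly_lt_of_gap (n i : ℕ) (hi : i ≤ n) (f g : ℕ → ℝ) (δ C : ℝ)
    (hδ : 0 < δ) (hC : 0 ≤ C)
    (heq : ∀ j < i, f j = g j) (hgap : f i + δ ≤ g i)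
    (hub : ∀ j, f j - g j ≤ C)
    (t : ℝ) (ht : 0 < t) (ht1 : t ≤ 1) (ht2 : t * (C * n + 1) < δ) :
    evalPoly n f t < evalPoly n g t := by
  rw [← sub_pos]
  have hdiff : evalPoly n g t - evalPoly n f t
      = ∑ j ∈ Finset.range (n + 1), (g j - f j) * t ^ j := by
    simp [evalPoly, ← Finset.sum_sub_distrib, sub_mul]
  rw [hdiff]
  have h1 : ∑ j ∈ Finset.range (n + 1), (g j - f j) * t ^ j
      = (g i - f i) * t ^ i + ∑ j ∈ Finset.Ico (i + 1) (n + 1), (g j - f j) * t ^ j := by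
    rw [Finset.range_eq_Ico,
      ← Finset.sum_Ico_consecutive _ (Nat.zero_le i) (by omega : i ≤ n + 1)]
    have hz : ∑ j ∈ Finset.Ico 0 i, (g j - f j) * t ^ j = 0 :=
      Finset.sum_eq_zero fun j hj => by
        rw [heq j (Finset.mem_Ico.mp hj).2]; ring
    rw [hz, zero_add, Finset.sum_eq_sum_Ico_succ_bot (by omega : i < n + 1)]
  rw [h1]
  have htail : ∀ j ∈ Finset.Ico (i + 1) (n + 1), -(C * t ^ (i + 1)) ≤ (g j - f j) * t ^ j := by
    intro j hj
    have h2 := hub j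
    have htj : t ^ j ≤ t ^ (i + 1) :=
      pow_le_pow_of_le_one ht.le ht1 (Finset.mem_Ico.mp hj).1
    have h3 : (0:ℝ) ≤ t ^ j := by positivity
    nlinarith
  have hcard : (Finset.Ico (i + 1) (n + 1)).card ≤ n := by
    rw [Nat.card_Ico]; omega
  have hsum : -((n : ℝ) * (C * t ^ (i + 1)))
      ≤ ∑ j ∈ Finset.Ico (i + 1) (n + 1), (g j - f j) * t ^ j := by
    calc -((n : ℝ) * (C * t ^ (i + 1)))
        ≤ ((Finset.Ico (i + 1) (n + 1)).card : ℝ) * (-(C * t ^ (i + 1))) := by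
          have h4 : (0:ℝ) ≤ C * t ^ (i + 1) := by positivity
          have h5 : ((Finset.Ico (i + 1) (n + 1)).card : ℝ) ≤ (n : ℝ) := by
            exact_mod_cast hcard
          nlinarith
      _ ≤ ∑ j ∈ Finset.Ico (i + 1) (n + 1), (g j - f j) * t ^ j := by
          rw [← nsmul_eq_mul]
          exact Finset.card_nsmul_le_sum _ _ _ htail
  have hhead : δ * t ^ i ≤ (g i - f i) * t ^ i := by
    have : (0:ℝ) ≤ t ^ i := by positivity
    nlinarith
  have hpow : t ^ (i + 1) = t ^ i * t := pow_succ t i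
  have hti : (0:ℝ) < t ^ i := by positivity
  rw [hpow] at hsum
  have h0 : (0:ℝ) < δ - C * ↑n * t := by nlinarith
  nlinarith [mul_pos hti h0, hsum, hhead]

/-- Let `D` be a set of polynomials of degree at most `n` with coefficients in `(1/N)·ℤ`
and bounded above. Then `P ∈ D` is the unique maximum of `D` for the lexicographic order
iff `P(t) > Q(t)` for all other `Q ∈ D` and all sufficiently small `t > 0`. -/
theorem stmt_19 (n N : ℕ) (hN : 0 < N) (D : Set (ℕ → ℝ))
    (hdeg : ∀ f ∈ D, ∀ i : ℕ, n < i → f i = 0)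
    (hcoef : ∀ f ∈ D, ∀ i : ℕ, ∃ k : ℤ, f i = (k : ℝ) / (N : ℝ))
    (hbdd : ∃ M : ℝ, ∀ f ∈ D, ∀ i : ℕ, f i ≤ M)
    (P : ℕ → ℝ) (hP : P ∈ D) :
    (∀ Q ∈ D, Q ≠ P → LexLt Q P) ↔
      ∃ ε > 0, ∀ t : ℝ, 0 < t → t < ε →
        ∀ Q ∈ D, Q ≠ P → evalPoly n Q t < evalPoly n P t := by
  have hN' : (0:ℝ) < N := by exact_mod_cast hN
  constructor
  · intro hlex
    obtain ⟨M, hM⟩ := hbdd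
    set B : ℝ := ∑ j ∈ Finset.range (n + 1), |P j| with hB
    set C : ℝ := |M| + B with hCdef
    have hBnn : 0 ≤ B := Finset.sum_nonneg fun j _ => abs_nonneg _
    have hC : 0 ≤ C := by positivity
    set δ : ℝ := 1 / N with hδdef
    have hδ : 0 < δ := by positivity
    refine ⟨min 1 (δ / (C * n + 1)), by positivity, ?_⟩
    intro t ht htε Q hQ hQP
    obtain ⟨i, heq, hlt⟩ := hlex Q hQ hQP
    have hi : i ≤ n := by
      by_contra h
      rw [hdeg Q hQ i (by omega), hdeg P hP i (by omega)] at hlt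
      exact lt_irrefl _ hlt
    have hub : ∀ j, Q j - P j ≤ C := by
      intro j
      by_cases hj : j ≤ n
      · have h1 : Q j ≤ M := hM Q hQ j
        have h2 : |P j| ≤ B :=
          Finset.single_le_sum (f := fun k => |P k|) (fun k _ => abs_nonneg _)
            (Finset.mem_range.mpr (by omega))
        have h3 := neg_abs_le (P j)
        have h4 := le_abs_self M
        simp only [hCdef]; linarith
      · rw [hdeg Q hQ j (by omega), hdeg P hP j (by omega)]
        simpa using hC
    have hgap : Q i + δ ≤ P i := by
      obtain ⟨a, ha⟩ := hcoef Q hQ i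
      obtain ⟨b, hb⟩ := hcoef P hP i
      have hab : (a : ℝ) < b := by
        rw [ha, hb] at hlt
        exact (div_lt_div_iff_of_pos_right hN').mp hlt
      have hab' : (a : ℝ) + 1 ≤ b := by
        have : a + 1 ≤ b := by exact_mod_cast hab
        exact_mod_cast this
      rw [ha, hb, hδdef, ← add_div]
      gcongr
    have ht1 : t ≤ 1 := le_of_lt (htε.trans_le (min_le_left _ _))
    have ht2 : t * (C * n + 1) < δ := by
      have h5 : t < δ / (C * n + 1) := htε.trans_le (min_le_right _ _)
      have h6 : (0:ℝ) < C * n + 1 := by positivity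
      exact (lt_div_iff₀ h6).mp h5
    exact evalPoly_lt_of_gap n i hi Q P δ C hδ hC heq hgap hub t ht ht1 ht2
  · intro ⟨ε, hε, hval⟩ Q hQ hQP
    have hne : ∃ i, Q i ≠ P i := Function.ne_iff.mp hQP
    set i := Nat.find hne with hidef
    have hi_ne : Q i ≠ P i := Nat.find_spec hne
    have hi_min : ∀ j < i, Q j = P j := fun j hj =>
      not_not.mp (Nat.find_min hne hj)
    have hi : i ≤ n := by
      by_contra h
      exact hi_ne (by rw [hdeg Q hQ i (by omega), hdeg P hP i (by omega)])
    rcases lt_or_gt_of_ne hi_ne with h | h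
    · exact ⟨i, hi_min, h⟩
    · exfalso
      set C : ℝ := ∑ j ∈ Finset.range (n + 1), (|P j| + |Q j|) with hCdef
      have hC : 0 ≤ C :=
        Finset.sum_nonneg fun j _ => by positivity
      have hub : ∀ j, P j - Q j ≤ C := by
        intro j
        by_cases hj : j ≤ n
        · have h2 : |P j| + |Q j| ≤ C :=
            Finset.single_le_sum (f := fun k => |P k| + |Q k|)
              (fun k _ => by positivity) (Finset.mem_range.mpr (by omega))
          have h3 := neg_abs_le (Q j)
          have h4 := le_abs_self (P j)
          linarith
        · rw [hdeg Q hQ j (by omega), hdeg P hP j (by omega)]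
          simpa using hC
      set δ : ℝ := Q i - P i with hδdef
      have hδ : 0 < δ := sub_pos.mpr h
      set t : ℝ := min ε (min 1 (δ / (C * n + 1))) / 2 with htdef
      have h6 : (0:ℝ) < C * n + 1 := by positivity
      have ht : 0 < t := by positivity
      have htε : t < ε := by
        have := min_le_left ε (min 1 (δ / (C * n + 1)))
        rw [htdef]; linarith
      have ht1 : t ≤ 1 := by
        have h7 := (min_le_right ε (min 1 (δ / (C * n + 1)))).trans
          (min_le_left 1 (δ / (C * n + 1)))
        rw [htdef]; linarith
      have ht2 : t * (C * n + 1) < δ := by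
        have h8 : t < δ / (C * n + 1) := by
          have h7 := (min_le_right ε (min 1 (δ / (C * n + 1)))).trans
            (min_le_right 1 (δ / (C * n + 1)))
          have h9 : (0:ℝ) < δ / (C * n + 1) := by positivity
          rw [htdef]; linarith
        exact (lt_div_iff₀ h6).mp h8
      have hPQ : evalPoly n P t < evalPoly n Q t :=
        evalPoly_lt_of_gap n i hi P Q δ C hδ hC
          (fun j hj => (hi_min j hj).symm) (by rw [hδdef]; linarith)
          hub t ht ht1 ht2
      exact absurd (hval t ht htε Q hQ hQP) (not_lt.mpr hPQ.le)
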